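/- Decidability of E: validity in the class of all preference models is decidable, i.e., there exists a computable function f from formulas of the language of E to Booleans such that f(φ) = true if and only if φ is valid in the class of all preference models. -/

import Mathlib

/-- Formulas of Åqvist's dyadic deontic logic **E**:
`φ ::= p | ¬φ | φ∧φ | □φ | ○(φ/φ)`.
`EForm.ob ψ φ` denotes `○(ψ/φ)` ("ψ is obligatory, given φ"). -/
inductive EForm : Type where
  | atom : ℕ → EForm
  | neg  : EForm → EForm
  | conj : EForm → EForm → EForm
  | box  : EForm → EForm
  | ob   : EForm → EForm → EForm
deriving DecidableEq

/-- Material implication, defined classically. -/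
def EForm.impl (φ ψ : EForm) : EForm := .neg (.conj φ (.neg ψ))

/-- Biconditional. -/
def EForm.iff' (φ ψ : EForm) : EForm := .conj (φ.impl ψ) (ψ.impl φ)

/-- A preference model `M = (W, ≽, V)`: a nonempty set of worlds, a betterness
relation, and a valuation. -/
structure PrefModel where
  W : Type
  ne : Nonempty W
  R : W → W → Prop
  V : ℕ → W → Prop

/-- Satisfaction `M,s ⊨ φ`. In particular
`M,s ⊨ ○(ψ/φ)` iff `opt_≽(‖φ‖) ⊆ ‖ψ‖`, where
`opt_≽(‖φ‖) = {w ∈ ‖φ‖ : ∀ y, (M,y ⊨ φ) → w ≽ y}`. -/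
def PrefModel.sat (M : PrefModel) : M.W → EForm → Prop
  | s, .atom n   => M.V n s
  | s, .neg φ    => ¬ PrefModel.sat M s φ
  | s, .conj φ ψ => PrefModel.sat M s φ ∧ PrefModel.sat M s ψ
  | _, .box φ    => ∀ t, PrefModel.sat M t φ
  | _, .ob ψ φ   => ∀ w, (PrefModel.sat M w φ ∧ ∀ y, PrefModel.sat M y φ → M.R w y) →
                     PrefModel.sat M w ψ

/-- Validity in the class of all preference models. -/
def EValid (φ : EForm) : Prop := ∀ (M : PrefModel) (s : M.W), M.sat s φ

/-- An explicit Gödel numbering of the formulas of E (using Cantor pairing);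
it is injective, so it identifies formulas with their codes. -/
def encE : EForm → ℕ
  | .atom n   => Nat.pair 0 n
  | .neg φ    => Nat.pair 1 (encE φ)
  | .conj φ ψ => Nat.pair 2 (Nat.pair (encE φ) (encE ψ))
  | .box φ    => Nat.pair 3 (encE φ)
  | .ob ψ φ   => Nat.pair 4 (Nat.pair (encE ψ) (encE φ))



abbrev VA := List (ℕ × Bool)

def aget (l : VA) (k : ℕ) : Bool := (l.lookup k).getD false

lemma pair_gt_right (a b : ℕ) (h : 1 ≤ a) : b < Nat.pair a b := by
  simp only [Nat.pair]; split <;> nlinarith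

lemma unpair2_lt {n : ℕ} (h : n.unpair.1 ≠ 0) : n.unpair.2 < n := by
  conv_rhs => rw [← Nat.pair_unpair n]
  exact pair_gt_right _ _ (Nat.one_le_iff_ne_zero.2 h)

/-- evaluation of a coded formula given an atom assignment and a table of
values for box/ob formulas -/
def evC (ctx : VA × VA) (n : ℕ) : Bool :=
  if n.unpair.1 = 1 then !(evC ctx n.unpair.2)
  else if n.unpair.1 = 2 then
    evC ctx n.unpair.2.unpair.1 && evC ctx n.unpair.2.unpair.2
  else if n.unpair.1 = 0 then aget ctx.1 n.unpair.2
  else if n.unpair.1 = 3 ∨ n.unpair.1 = 4 then aget ctx.2 n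
  else false
termination_by n
decreasing_by
  · exact unpair2_lt (by omega)
  · exact lt_of_le_of_lt (Nat.unpair_left_le _) (unpair2_lt (by omega))
  · exact lt_of_le_of_lt (Nat.unpair_right_le _) (unpair2_lt (by omega))

def atomsC (n : ℕ) : List ℕ :=
  if n.unpair.1 = 0 then [n.unpair.2]
  else if n.unpair.1 = 1 ∨ n.unpair.1 = 3 then atomsC n.unpair.2
  else if n.unpair.1 = 2 ∨ n.unpair.1 = 4 then
    atomsC n.unpair.2.unpair.1 ++ atomsC n.unpair.2.unpair.2
  else []
termination_by n
decreasing_by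
  · exact unpair2_lt (by omega)
  · exact lt_of_le_of_lt (Nat.unpair_left_le _) (unpair2_lt (by omega))
  · exact lt_of_le_of_lt (Nat.unpair_right_le _) (unpair2_lt (by omega))

def obboxC (n : ℕ) : List ℕ :=
  if n.unpair.1 = 1 then obboxC n.unpair.2
  else if n.unpair.1 = 2 then obboxC n.unpair.2.unpair.1 ++ obboxC n.unpair.2.unpair.2
  else if n.unpair.1 = 3 then n :: obboxC n.unpair.2
  else if n.unpair.1 = 4 then n :: (obboxC n.unpair.2.unpair.1 ++ obboxC n.unpair.2.unpair.2)
  else []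
termination_by n
decreasing_by
  · exact unpair2_lt (by omega)
  · exact lt_of_le_of_lt (Nat.unpair_left_le _) (unpair2_lt (by omega))
  · exact lt_of_le_of_lt (Nat.unpair_right_le _) (unpair2_lt (by omega))
  · exact unpair2_lt (by omega)
  · exact lt_of_le_of_lt (Nat.unpair_left_le _) (unpair2_lt (by omega))
  · exact lt_of_le_of_lt (Nat.unpair_right_le _) (unpair2_lt (by omega))

/-- all assignments (as association lists) on a given list of keys -/
def assigns : List ℕ → List VA :=
  List.foldr (fun a acc => acc.map (fun v => (a, true) :: v) ++ acc.map (fun v => (a, false) :: v)) [[]]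

/-- all sublists of a list -/
def subl : List VA → List (List VA) :=
  List.foldr (fun a acc => acc ++ acc.map (fun s => a :: s)) [[]]

def condB (obs : List ℕ) (S : List VA) (G : VA) : Bool :=
  obs.all fun c =>
    if c.unpair.1 = 3 then aget G c == S.all (fun v => evC (v, G) c.unpair.2) else true

def inclC (S : List VA) (G : VA) (c' c : ℕ) : Bool :=
  S.all fun u => !(evC (u, G) c'.unpair.2.unpair.2) || evC (u, G) c.unpair.2.unpair.2

def okWit (obs : List ℕ) (S : List VA) (G : VA) (c : ℕ) (v : VA) : Bool :=
  evC (v, G) c.unpair.2.unpair.2 && !(evC (v, G) c.unpair.2.unpair.1) &&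
  obs.all fun c' =>
    if c'.unpair.1 = 4 ∧ aget G c' = true then
      !(evC (v, G) c'.unpair.2.unpair.2 && !(evC (v, G) c'.unpair.2.unpair.1)
        && inclC S G c' c)
    else true

def condC (obs : List ℕ) (S : List VA) (G : VA) : Bool :=
  obs.all fun c =>
    if c.unpair.1 = 4 ∧ aget G c = false then S.any (okWit obs S G c) else true

def satC (n : ℕ) : Bool :=
  (subl (assigns (atomsC n))).any fun S =>
    (S.any fun _ => true) && ((assigns (obboxC n)).any fun G =>
      condB (obboxC n) S G && condC (obboxC n) S G && S.any fun v => evC (v, G) n)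

def decE (n : ℕ) : Bool := !(satC (Nat.pair 1 n))


namespace EDec
open Primrec

lemma all_eq_foldr {α} (l : List α) (p : α → Bool) :
    l.all p = l.foldr (fun b r => p b && r) true := by
  induction l with
  | nil => rfl
  | cons a l ih => simp [List.all_cons, ih]

lemma any_eq_foldr {α} (l : List α) (p : α → Bool) :
    l.any p = l.foldr (fun b r => p b || r) false := by
  induction l with
  | nil => rfl
  | cons a l ih => simp [List.any_cons, ih]

theorem aget_pr : Primrec₂ aget :=
  Primrec.option_getD.comp₂ (Primrec.listLookup.comp₂ Primrec₂.right Primrec₂.left)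
    (Primrec₂.const false)

theorem listAll_pr {α β : Type} [Primcodable α] [Primcodable β] {p : α → β → Bool}
    (hp : Primrec₂ p) : Primrec₂ fun (a : α) (l : List β) => l.all (p a) := by
  have hh : Primrec₂ (fun (x : α × List β) (q : β × Bool) => p x.1 q.1 && q.2) :=
    Primrec.to₂ <| (Primrec.dom_bool₂ (· && ·)).comp
      (hp.comp (fst.comp fst) (fst.comp snd)) (snd.comp snd)
  have h := Primrec.list_foldr (Primrec.snd (α := α) (β := List β)) (Primrec.const true) hh
  exact Primrec.to₂ <| h.of_eq fun x => (all_eq_foldr _ _).symm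

theorem listAny_pr {α β : Type} [Primcodable α] [Primcodable β] {p : α → β → Bool}
    (hp : Primrec₂ p) : Primrec₂ fun (a : α) (l : List β) => l.any (p a) := by
  have hh : Primrec₂ (fun (x : α × List β) (q : β × Bool) => p x.1 q.1 || q.2) :=
    Primrec.to₂ <| (Primrec.dom_bool₂ (· || ·)).comp
      (hp.comp (fst.comp fst) (fst.comp snd)) (snd.comp snd)
  have h := Primrec.list_foldr (Primrec.snd (α := α) (β := List β)) (Primrec.const false) hh
  exact Primrec.to₂ <| h.of_eq fun x => (any_eq_foldr _ _).symm

end EDec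


namespace EDec
open Primrec

lemma getD_range_map {σ : Type} (f : ℕ → σ) (d : σ) {i n : ℕ} (h : i < n) :
    ((List.range n).map f).getD i d = f i := by
  simp [List.getD_eq_getElem?_getD, List.getElem?_range h]

def evStep (ctx : VA × VA) (prev : List Bool) : Bool :=
  let n := prev.length
  if n.unpair.1 = 1 then !(prev.getD n.unpair.2 false)
  else if n.unpair.1 = 2 then
    prev.getD n.unpair.2.unpair.1 false && prev.getD n.unpair.2.unpair.2 false
  else if n.unpair.1 = 0 then aget ctx.1 n.unpair.2
  else if n.unpair.1 = 3 ∨ n.unpair.1 = 4 then aget ctx.2 n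
  else false

lemma evC_eq_step (ctx : VA × VA) (n : ℕ) :
    evStep ctx ((List.range n).map (evC ctx)) = evC ctx n := by
  rw [evC]
  unfold evStep
  simp only [List.length_map, List.length_range]
  split_ifs with h1 h2 h3 h4
  · rw [getD_range_map _ _ (unpair2_lt (by omega))]
  · rw [getD_range_map _ _ (lt_of_le_of_lt (Nat.unpair_left_le _) (unpair2_lt (by omega))),
      getD_range_map _ _ (lt_of_le_of_lt (Nat.unpair_right_le _) (unpair2_lt (by omega)))]
  · rfl
  · rfl
  · rfl

theorem evStep_pr : Primrec₂ evStep := by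
  have len : Primrec fun x : (VA × VA) × List Bool => x.2.length := list_length.comp snd
  have t : Primrec fun x : (VA × VA) × List Bool => x.2.length.unpair.1 :=
    fst.comp (unpair.comp len)
  have r : Primrec fun x : (VA × VA) × List Bool => x.2.length.unpair.2 :=
    snd.comp (unpair.comp len)
  have b1 : Primrec fun x : (VA × VA) × List Bool => !(x.2.getD x.2.length.unpair.2 false) :=
    (dom_bool (!·)).comp ((list_getD false).comp snd r)
  have b2 : Primrec fun x : (VA × VA) × List Bool =>
      (x.2.getD x.2.length.unpair.2.unpair.1 false && x.2.getD x.2.length.unpair.2.unpair.2 false) :=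
    (dom_bool₂ (· && ·)).comp ((list_getD false).comp snd (fst.comp (unpair.comp r)))
      ((list_getD false).comp snd (snd.comp (unpair.comp r)))
  have b3 : Primrec fun x : (VA × VA) × List Bool => aget x.1.1 x.2.length.unpair.2 :=
    aget_pr.comp (fst.comp fst) r
  have b4 : Primrec fun x : (VA × VA) × List Bool => aget x.1.2 x.2.length :=
    aget_pr.comp (snd.comp fst) len
  have c1 : PrimrecPred fun x : (VA × VA) × List Bool => x.2.length.unpair.1 = 1 :=
    PrimrecRel.comp Primrec.eq t (const 1)
  have c2 : PrimrecPred fun x : (VA × VA) × List Bool => x.2.length.unpair.1 = 2 :=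
    PrimrecRel.comp Primrec.eq t (const 2)
  have c0 : PrimrecPred fun x : (VA × VA) × List Bool => x.2.length.unpair.1 = 0 :=
    PrimrecRel.comp Primrec.eq t (const 0)
  have c34 : PrimrecPred fun x : (VA × VA) × List Bool =>
      x.2.length.unpair.1 = 3 ∨ x.2.length.unpair.1 = 4 :=
    PrimrecPred.or (PrimrecRel.comp Primrec.eq t (const 3)) (PrimrecRel.comp Primrec.eq t (const 4))
  exact Primrec.to₂ <| Primrec.ite c1 b1 <| Primrec.ite c2 b2 <| Primrec.ite c0 b3 <|
    Primrec.ite c34 b4 (const false)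

theorem evC_pr : Primrec₂ evC :=
  Primrec.nat_strong_rec evC ((option_some.comp evStep_pr).to₂ :
      Primrec₂ fun a l => some (evStep a l))
    fun a n => congrArg some (evC_eq_step a n)

end EDec


namespace EDec
open Primrec

def atomsStep (prev : List (List ℕ)) : List ℕ :=
  let n := prev.length
  if n.unpair.1 = 0 then [n.unpair.2]
  else if n.unpair.1 = 1 ∨ n.unpair.1 = 3 then prev.getD n.unpair.2 []
  else if n.unpair.1 = 2 ∨ n.unpair.1 = 4 then
    prev.getD n.unpair.2.unpair.1 [] ++ prev.getD n.unpair.2.unpair.2 []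
  else []

lemma atomsC_eq_step (n : ℕ) :
    atomsStep ((List.range n).map atomsC) = atomsC n := by
  rw [atomsC]
  unfold atomsStep
  simp only [List.length_map, List.length_range]
  split_ifs with h1 h2 h3
  · rfl
  · rw [getD_range_map _ _ (unpair2_lt (by omega))]
  · rw [getD_range_map _ _ (lt_of_le_of_lt (Nat.unpair_left_le _) (unpair2_lt (by omega))),
      getD_range_map _ _ (lt_of_le_of_lt (Nat.unpair_right_le _) (unpair2_lt (by omega)))]
  · rfl

def obboxStep (prev : List (List ℕ)) : List ℕ :=
  let n := prev.length
  if n.unpair.1 = 1 then prev.getD n.unpair.2 []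
  else if n.unpair.1 = 2 then prev.getD n.unpair.2.unpair.1 [] ++ prev.getD n.unpair.2.unpair.2 []
  else if n.unpair.1 = 3 then n :: prev.getD n.unpair.2 []
  else if n.unpair.1 = 4 then
    n :: (prev.getD n.unpair.2.unpair.1 [] ++ prev.getD n.unpair.2.unpair.2 [])
  else []

lemma obboxC_eq_step (n : ℕ) :
    obboxStep ((List.range n).map obboxC) = obboxC n := by
  rw [obboxC]
  unfold obboxStep
  simp only [List.length_map, List.length_range]
  split_ifs with h1 h2 h3 h4
  · rw [getD_range_map _ _ (unpair2_lt (by omega))]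
  · rw [getD_range_map _ _ (lt_of_le_of_lt (Nat.unpair_left_le _) (unpair2_lt (by omega))),
      getD_range_map _ _ (lt_of_le_of_lt (Nat.unpair_right_le _) (unpair2_lt (by omega)))]
  · rw [getD_range_map _ _ (unpair2_lt (by omega))]
  · rw [getD_range_map _ _ (lt_of_le_of_lt (Nat.unpair_left_le _) (unpair2_lt (by omega))),
      getD_range_map _ _ (lt_of_le_of_lt (Nat.unpair_right_le _) (unpair2_lt (by omega)))]
  · rfl

section
variable {α : Type} [Primcodable α]

private theorem step_components :
    (Primrec fun x : Unit × List (List ℕ) => x.2.length) ∧ True := ⟨list_length.comp snd, trivial⟩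

theorem atomsStep_pr : Primrec fun x : Unit × List (List ℕ) => atomsStep x.2 := by
  have len : Primrec fun x : Unit × List (List ℕ) => x.2.length := list_length.comp snd
  have t : Primrec fun x : Unit × List (List ℕ) => x.2.length.unpair.1 :=
    fst.comp (unpair.comp len)
  have r : Primrec fun x : Unit × List (List ℕ) => x.2.length.unpair.2 :=
    snd.comp (unpair.comp len)
  have g1 : Primrec fun x : Unit × List (List ℕ) => x.2.getD x.2.length.unpair.2 [] :=
    (list_getD []).comp snd r
  have g2 : Primrec fun x : Unit × List (List ℕ) =>
      x.2.getD x.2.length.unpair.2.unpair.1 [] ++ x.2.getD x.2.length.unpair.2.unpair.2 [] :=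
    list_append.comp ((list_getD []).comp snd (fst.comp (unpair.comp r)))
      ((list_getD []).comp snd (snd.comp (unpair.comp r)))
  have b0 : Primrec fun x : Unit × List (List ℕ) => [x.2.length.unpair.2] :=
    list_cons.comp r (const [])
  exact Primrec.ite (PrimrecRel.comp Primrec.eq t (const 0)) b0 <|
    Primrec.ite (PrimrecPred.or (PrimrecRel.comp Primrec.eq t (const 1))
      (PrimrecRel.comp Primrec.eq t (const 3))) g1 <|
    Primrec.ite (PrimrecPred.or (PrimrecRel.comp Primrec.eq t (const 2))
      (PrimrecRel.comp Primrec.eq t (const 4))) g2 (const [])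

theorem obboxStep_pr : Primrec fun x : Unit × List (List ℕ) => obboxStep x.2 := by
  have len : Primrec fun x : Unit × List (List ℕ) => x.2.length := list_length.comp snd
  have t : Primrec fun x : Unit × List (List ℕ) => x.2.length.unpair.1 :=
    fst.comp (unpair.comp len)
  have r : Primrec fun x : Unit × List (List ℕ) => x.2.length.unpair.2 :=
    snd.comp (unpair.comp len)
  have g1 : Primrec fun x : Unit × List (List ℕ) => x.2.getD x.2.length.unpair.2 [] :=
    (list_getD []).comp snd r
  have g2 : Primrec fun x : Unit × List (List ℕ) =>
      x.2.getD x.2.length.unpair.2.unpair.1 [] ++ x.2.getD x.2.length.unpair.2.unpair.2 [] :=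
    list_append.comp ((list_getD []).comp snd (fst.comp (unpair.comp r)))
      ((list_getD []).comp snd (snd.comp (unpair.comp r)))
  exact Primrec.ite (PrimrecRel.comp Primrec.eq t (const 1)) g1 <|
    Primrec.ite (PrimrecRel.comp Primrec.eq t (const 2)) g2 <|
    Primrec.ite (PrimrecRel.comp Primrec.eq t (const 3)) (list_cons.comp len g1) <|
    Primrec.ite (PrimrecRel.comp Primrec.eq t (const 4)) (list_cons.comp len g2) (const [])

end

theorem atomsC_pr : Primrec atomsC := by
  have h : Primrec₂ fun (_ : Unit) (n : ℕ) => atomsC n :=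
    Primrec.nat_strong_rec _ ((option_some.comp atomsStep_pr).to₂ :
        Primrec₂ fun (_ : Unit) l => some (atomsStep l))
      fun _ n => congrArg some (atomsC_eq_step n)
  exact h.comp (const ()) Primrec.id

theorem obboxC_pr : Primrec obboxC := by
  have h : Primrec₂ fun (_ : Unit) (n : ℕ) => obboxC n :=
    Primrec.nat_strong_rec _ ((option_some.comp obboxStep_pr).to₂ :
        Primrec₂ fun (_ : Unit) l => some (obboxStep l))
      fun _ n => congrArg some (obboxC_eq_step n)
  exact h.comp (const ()) Primrec.id

end EDec


namespace EDec
open Primrec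

theorem assigns_pr : Primrec assigns := by
  have hinner1 : Primrec₂ fun (x : List ℕ × (ℕ × List VA)) (v : VA) => (x.2.1, true) :: v :=
    Primrec.to₂ <| list_cons.comp (Primrec.pair (fst.comp (snd.comp fst)) (const true)) snd
  have hinner2 : Primrec₂ fun (x : List ℕ × (ℕ × List VA)) (v : VA) => (x.2.1, false) :: v :=
    Primrec.to₂ <| list_cons.comp (Primrec.pair (fst.comp (snd.comp fst)) (const false)) snd
  have hh : Primrec₂ fun (x : List ℕ) (p : ℕ × List VA) =>
      p.2.map (fun v => (p.1, true) :: v) ++ p.2.map (fun v => (p.1, false) :: v) :=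
    Primrec.to₂ <| list_append.comp (list_map (snd.comp snd) hinner1) (list_map (snd.comp snd) hinner2)
  have h := Primrec.list_foldr (Primrec.id (α := List ℕ)) (const [[]]) hh
  exact h.of_eq fun l => rfl

theorem subl_pr : Primrec subl := by
  have hinner : Primrec₂ fun (x : List VA × (VA × List (List VA))) (s : List VA) => x.2.1 :: s :=
    Primrec.to₂ <| list_cons.comp (fst.comp (snd.comp fst)) snd
  have hh : Primrec₂ fun (x : List VA) (p : VA × List (List VA)) =>
      p.2 ++ p.2.map (fun s => p.1 :: s) :=
    Primrec.to₂ <| list_append.comp (snd.comp snd) (list_map (snd.comp snd) hinner)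
  have h := Primrec.list_foldr (Primrec.id (α := List VA)) (const [[]]) hh
  exact h.of_eq fun l => rfl

/-- `evC (v, G) m` with context `(G, m)`, argument `v`. -/
theorem evCtx_pr : Primrec₂ fun (z : VA × ℕ) (v : VA) => evC (v, z.1) z.2 :=
  evC_pr.comp₂ (Primrec₂.pair.comp₂ Primrec₂.right (Primrec.fst.comp₂ Primrec₂.left))
    (Primrec.snd.comp₂ Primrec₂.left)

theorem condB_pr : Primrec fun x : (List ℕ × List VA) × VA => condB x.1.1 x.1.2 x.2 := by
  have hSall : Primrec fun y : ((List ℕ × List VA) × VA) × ℕ =>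
      y.1.1.2.all fun v => evC (v, y.1.2) y.2.unpair.2 :=
    (listAll_pr evCtx_pr).comp
      (Primrec.pair (snd.comp fst) (snd.comp (unpair.comp snd))) (snd.comp (fst.comp fst))
  have hthen : Primrec fun y : ((List ℕ × List VA) × VA) × ℕ =>
      (aget y.1.2 y.2 == y.1.1.2.all fun v => evC (v, y.1.2) y.2.unpair.2) :=
    (dom_bool₂ (· == ·)).comp (aget_pr.comp (snd.comp fst) snd) hSall
  have hp : Primrec₂ fun (x : (List ℕ × List VA) × VA) (c : ℕ) =>
      if c.unpair.1 = 3 then (aget x.2 c == x.1.2.all fun v => evC (v, x.2) c.unpair.2) else true :=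
    Primrec.to₂ <| Primrec.ite
      (PrimrecRel.comp Primrec.eq (fst.comp (unpair.comp snd)) (const 3)) hthen (const true)
  exact ((listAll_pr hp).comp Primrec.id (fst.comp fst)).of_eq (fun x => by simp [condB])
end EDec


namespace EDec
open Primrec

theorem inclC_pr : Primrec fun w : (List VA × VA) × ℕ × ℕ => inclC w.1.1 w.1.2 w.2.1 w.2.2 := by
  have q : Primrec₂ fun (z : VA × ℕ × ℕ) (u : VA) => (!(evC (u, z.1) z.2.1) || evC (u, z.1) z.2.2) :=
    Primrec.to₂ <| (dom_bool₂ (fun b1 b2 => !b1 || b2)).comp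
      (evC_pr.comp (Primrec.pair snd (fst.comp fst)) (fst.comp (snd.comp fst)))
      (evC_pr.comp (Primrec.pair snd (fst.comp fst)) (snd.comp (snd.comp fst)))
  have hz : Primrec fun w : (List VA × VA) × ℕ × ℕ =>
      ((w.1.2, w.2.1.unpair.2.unpair.2, w.2.2.unpair.2.unpair.2) : VA × ℕ × ℕ) :=
    Primrec.pair (snd.comp fst) (Primrec.pair
      (snd.comp (unpair.comp (snd.comp (unpair.comp (fst.comp snd)))))
      (snd.comp (unpair.comp (snd.comp (unpair.comp (snd.comp snd))))))
  exact ((listAll_pr q).comp hz (fst.comp fst)).of_eq fun w => by simp [inclC]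

theorem okWit_pr : Primrec₂ fun (ctx : (List ℕ × List VA × VA) × ℕ) (v : VA) =>
    okWit ctx.1.1 ctx.1.2.1 ctx.1.2.2 ctx.2 v := by
  have hobs : Primrec fun y : ((List ℕ × List VA × VA) × ℕ) × VA => y.1.1.1 :=
    fst.comp (fst.comp fst)
  have hS : Primrec fun y : ((List ℕ × List VA × VA) × ℕ) × VA => y.1.1.2.1 :=
    fst.comp (snd.comp (fst.comp fst))
  have hG : Primrec fun y : ((List ℕ × List VA × VA) × ℕ) × VA => y.1.1.2.2 :=
    snd.comp (snd.comp (fst.comp fst))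
  have hc : Primrec fun y : ((List ℕ × List VA × VA) × ℕ) × VA => y.1.2 := snd.comp fst
  have hv : Primrec fun y : ((List ℕ × List VA × VA) × ℕ) × VA => y.2 := snd
  have hA : Primrec fun y : ((List ℕ × List VA × VA) × ℕ) × VA =>
      evC (y.2, y.1.1.2.2) y.1.2.unpair.2.unpair.2 :=
    evC_pr.comp (Primrec.pair hv hG) (snd.comp (unpair.comp (snd.comp (unpair.comp hc))))
  have hB : Primrec fun y : ((List ℕ × List VA × VA) × ℕ) × VA =>
      !(evC (y.2, y.1.1.2.2) y.1.2.unpair.2.unpair.1) :=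
    (dom_bool (!·)).comp
      (evC_pr.comp (Primrec.pair hv hG) (fst.comp (unpair.comp (snd.comp (unpair.comp hc)))))
  -- inner predicate over c', context z = ((S, G), c, v)
  have pred : Primrec₂ fun (z : (List VA × VA) × ℕ × VA) (c' : ℕ) =>
      (if c'.unpair.1 = 4 ∧ aget z.1.2 c' = true then
        !(evC (z.2.2, z.1.2) c'.unpair.2.unpair.2 && !(evC (z.2.2, z.1.2) c'.unpair.2.unpair.1)
          && inclC z.1.1 z.1.2 c' z.2.1)
      else true) := by
    have zG : Primrec fun u : ((List VA × VA) × ℕ × VA) × ℕ => u.1.1.2 := snd.comp (fst.comp fst)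
    have zS : Primrec fun u : ((List VA × VA) × ℕ × VA) × ℕ => u.1.1.1 := fst.comp (fst.comp fst)
    have zc : Primrec fun u : ((List VA × VA) × ℕ × VA) × ℕ => u.1.2.1 := fst.comp (snd.comp fst)
    have zv : Primrec fun u : ((List VA × VA) × ℕ × VA) × ℕ => u.1.2.2 := snd.comp (snd.comp fst)
    have zc' : Primrec fun u : ((List VA × VA) × ℕ × VA) × ℕ => u.2 := snd
    have e1 : Primrec fun u : ((List VA × VA) × ℕ × VA) × ℕ =>
        evC (u.1.2.2, u.1.1.2) u.2.unpair.2.unpair.2 :=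
      evC_pr.comp (Primrec.pair zv zG) (snd.comp (unpair.comp (snd.comp (unpair.comp zc'))))
    have e2 : Primrec fun u : ((List VA × VA) × ℕ × VA) × ℕ =>
        !(evC (u.1.2.2, u.1.1.2) u.2.unpair.2.unpair.1) :=
      (dom_bool (!·)).comp
        (evC_pr.comp (Primrec.pair zv zG) (fst.comp (unpair.comp (snd.comp (unpair.comp zc')))))
    have einc : Primrec fun u : ((List VA × VA) × ℕ × VA) × ℕ =>
        inclC u.1.1.1 u.1.1.2 u.2 u.1.2.1 :=
      inclC_pr.comp (Primrec.pair (Primrec.pair zS zG) (Primrec.pair zc' zc))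
    have hcond : PrimrecPred fun u : ((List VA × VA) × ℕ × VA) × ℕ =>
        u.2.unpair.1 = 4 ∧ aget u.1.1.2 u.2 = true :=
      PrimrecPred.and (PrimrecRel.comp Primrec.eq (fst.comp (unpair.comp snd)) (const 4))
        (PrimrecRel.comp Primrec.eq (aget_pr.comp zG zc') (const true))
    exact Primrec.to₂ <| Primrec.ite hcond
      ((dom_bool (!·)).comp ((dom_bool₂ (· && ·)).comp ((dom_bool₂ (· && ·)).comp e1 e2) einc))
      (const true)
  have hC : Primrec fun y : ((List ℕ × List VA × VA) × ℕ) × VA =>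
      y.1.1.1.all fun c' =>
        (if c'.unpair.1 = 4 ∧ aget y.1.1.2.2 c' = true then
          !(evC (y.2, y.1.1.2.2) c'.unpair.2.unpair.2 && !(evC (y.2, y.1.1.2.2) c'.unpair.2.unpair.1)
            && inclC y.1.1.2.1 y.1.1.2.2 c' y.1.2)
        else true) :=
    (listAll_pr pred).comp (Primrec.pair (Primrec.pair hS hG) (Primrec.pair hc hv)) hobs
  have main : Primrec fun y : ((List ℕ × List VA × VA) × ℕ) × VA =>
      okWit y.1.1.1 y.1.1.2.1 y.1.1.2.2 y.1.2 y.2 :=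
    ((dom_bool₂ (· && ·)).comp hA ((dom_bool₂ (· && ·)).comp hB hC)).of_eq
      fun y => by simp only [okWit, Bool.and_assoc]
  exact main.to₂

theorem condC_pr : Primrec fun x : (List ℕ × List VA) × VA => condC x.1.1 x.1.2 x.2 := by
  have hobs : Primrec fun y : ((List ℕ × List VA) × VA) × ℕ => y.1.1.1 := fst.comp (fst.comp fst)
  have hS : Primrec fun y : ((List ℕ × List VA) × VA) × ℕ => y.1.1.2 := snd.comp (fst.comp fst)
  have hG : Primrec fun y : ((List ℕ × List VA) × VA) × ℕ => y.1.2 := snd.comp fst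
  have hc : Primrec fun y : ((List ℕ × List VA) × VA) × ℕ => y.2 := snd
  have hany : Primrec fun y : ((List ℕ × List VA) × VA) × ℕ =>
      y.1.1.2.any (okWit y.1.1.1 y.1.1.2 y.1.2 y.2) :=
    (listAny_pr okWit_pr).comp
      (Primrec.pair (Primrec.pair hobs (Primrec.pair hS hG)) hc) hS
  have hcond : PrimrecPred fun y : ((List ℕ × List VA) × VA) × ℕ =>
      y.2.unpair.1 = 4 ∧ aget y.1.2 y.2 = false :=
    PrimrecPred.and (PrimrecRel.comp Primrec.eq (fst.comp (unpair.comp snd)) (const 4))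
      (PrimrecRel.comp Primrec.eq (aget_pr.comp hG hc) (const false))
  have pred : Primrec₂ fun (x : (List ℕ × List VA) × VA) (c : ℕ) =>
      (if c.unpair.1 = 4 ∧ aget x.2 c = false then x.1.2.any (okWit x.1.1 x.1.2 x.2 c) else true) :=
    Primrec.to₂ <| Primrec.ite hcond hany (const true)
  exact ((listAll_pr pred).comp Primrec.id (fst.comp fst)).of_eq fun x => by simp [condC]

theorem satC_pr : Primrec satC := by
  have inner2 : Primrec₂ fun (x : ℕ × List VA) (G : VA) =>
      (condB (obboxC x.1) x.2 G && condC (obboxC x.1) x.2 G && x.2.any fun v => evC (v, G) x.1) := by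
    have n : Primrec fun y : (ℕ × List VA) × VA => y.1.1 := fst.comp fst
    have S : Primrec fun y : (ℕ × List VA) × VA => y.1.2 := snd.comp fst
    have G : Primrec fun y : (ℕ × List VA) × VA => y.2 := snd
    have cB : Primrec fun y : (ℕ × List VA) × VA => condB (obboxC y.1.1) y.1.2 y.2 :=
      condB_pr.comp (Primrec.pair (Primrec.pair (obboxC_pr.comp n) S) G)
    have cC : Primrec fun y : (ℕ × List VA) × VA => condC (obboxC y.1.1) y.1.2 y.2 :=
      condC_pr.comp (Primrec.pair (Primrec.pair (obboxC_pr.comp n) S) G)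
    have lastp : Primrec fun y : (ℕ × List VA) × VA => y.1.2.any fun v => evC (v, y.2) y.1.1 :=
      (listAny_pr evCtx_pr).comp (Primrec.pair G n) S
    exact Primrec.to₂ <| (dom_bool₂ (· && ·)).comp ((dom_bool₂ (· && ·)).comp cB cC) lastp
  have predS : Primrec₂ fun (n : ℕ) (S : List VA) =>
      ((S.any fun _ => true) && ((assigns (obboxC n)).any fun G =>
        condB (obboxC n) S G && condC (obboxC n) S G && S.any fun v => evC (v, G) n)) := by
    have hne : Primrec fun y : ℕ × List VA => y.2.any fun _ => true :=
      (listAny_pr (Primrec₂.const true)).comp (const ()) snd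
    have hanyG : Primrec fun y : ℕ × List VA =>
        (assigns (obboxC y.1)).any fun G =>
          condB (obboxC y.1) y.2 G && condC (obboxC y.1) y.2 G && y.2.any fun v => evC (v, G) y.1 :=
      (listAny_pr inner2).comp (Primrec.pair fst snd) (assigns_pr.comp (obboxC_pr.comp fst))
    exact Primrec.to₂ <| (dom_bool₂ (· && ·)).comp hne hanyG
  exact ((listAny_pr predS).comp Primrec.id (subl_pr.comp (assigns_pr.comp atomsC_pr))).of_eq
    fun n => by simp [satC]

theorem decE_pr : Primrec decE :=
  ((dom_bool (!·)).comp (satC_pr.comp (Primrec₂.natPair.comp (const 1) Primrec.id))).of_eq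
    fun n => rfl

end EDec


def atomsL : EForm → List ℕ
  | .atom a => [a]
  | .neg φ => atomsL φ
  | .conj φ ψ => atomsL φ ++ atomsL ψ
  | .box φ => atomsL φ
  | .ob ψ φ => atomsL ψ ++ atomsL φ

def obboxL : EForm → List EForm
  | .atom _ => []
  | .neg φ => obboxL φ
  | .conj φ ψ => obboxL φ ++ obboxL ψ
  | .box φ => .box φ :: obboxL φ
  | .ob ψ φ => .ob ψ φ :: (obboxL ψ ++ obboxL φ)

lemma encE_atom (a : ℕ) : encE (.atom a) = Nat.pair 0 a := rfl
lemma encE_neg (φ : EForm) : encE (.neg φ) = Nat.pair 1 (encE φ) := rfl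
lemma encE_conj (φ ψ : EForm) : encE (.conj φ ψ) = Nat.pair 2 (Nat.pair (encE φ) (encE ψ)) := rfl
lemma encE_box (φ : EForm) : encE (.box φ) = Nat.pair 3 (encE φ) := rfl
lemma encE_ob (ψ φ : EForm) : encE (.ob ψ φ) = Nat.pair 4 (Nat.pair (encE ψ) (encE φ)) := rfl

-- code-level unfolding lemmas
lemma evC_code0 (ctx : VA × VA) (a : ℕ) : evC ctx (Nat.pair 0 a) = aget ctx.1 a := by
  rw [evC]; simp
lemma evC_code1 (ctx : VA × VA) (m : ℕ) : evC ctx (Nat.pair 1 m) = !evC ctx m := by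
  rw [evC]; simp
lemma evC_code2 (ctx : VA × VA) (m k : ℕ) :
    evC ctx (Nat.pair 2 (Nat.pair m k)) = (evC ctx m && evC ctx k) := by
  rw [evC]; simp
lemma evC_code3 (ctx : VA × VA) (m : ℕ) :
    evC ctx (Nat.pair 3 m) = aget ctx.2 (Nat.pair 3 m) := by
  rw [evC]; simp
lemma evC_code4 (ctx : VA × VA) (m : ℕ) :
    evC ctx (Nat.pair 4 m) = aget ctx.2 (Nat.pair 4 m) := by
  rw [evC]; simp

lemma atomsC_enc (φ : EForm) : atomsC (encE φ) = atomsL φ := by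
  induction φ with
  | atom a => rw [encE_atom, atomsC]; simp [atomsL]
  | neg φ ih => rw [encE_neg, atomsC]; simp [atomsL, ih]
  | conj φ ψ ih1 ih2 => rw [encE_conj, atomsC]; simp [atomsL, ih1, ih2]
  | box φ ih => rw [encE_box, atomsC]; simp [atomsL, ih]
  | ob ψ φ ih1 ih2 => rw [encE_ob, atomsC]; simp [atomsL, ih1, ih2]

lemma obboxC_enc (φ : EForm) : obboxC (encE φ) = (obboxL φ).map encE := by
  induction φ with
  | atom a => rw [encE_atom, obboxC]; simp [obboxL]
  | neg φ ih => rw [encE_neg, obboxC]; simp [obboxL, ih]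
  | conj φ ψ ih1 ih2 => rw [encE_conj, obboxC]; simp [obboxL, ih1, ih2]
  | box φ ih => rw [encE_box, obboxC]; simp [obboxL, ih, encE_box]
  | ob ψ φ ih1 ih2 => rw [encE_ob, obboxC]; simp [obboxL, ih1, ih2, encE_ob]

theorem encE_inj : Function.Injective encE := by
  intro x y h
  induction x generalizing y with
  | atom a =>
    cases y <;> first
      | exact absurd (Nat.pair_eq_pair.1 h).1 (by decide)
      | exact congrArg EForm.atom (Nat.pair_eq_pair.1 h).2
  | neg φ ih =>
    cases y <;> first
      | exact absurd (Nat.pair_eq_pair.1 h).1 (by decide)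
      | exact congrArg EForm.neg (ih (Nat.pair_eq_pair.1 h).2)
  | conj φ ψ ih1 ih2 =>
    cases y <;> first
      | exact absurd (Nat.pair_eq_pair.1 h).1 (by decide)
      | (obtain ⟨-, h2⟩ := Nat.pair_eq_pair.1 h
         obtain ⟨h3, h4⟩ := Nat.pair_eq_pair.1 h2
         rw [ih1 h3, ih2 h4])
  | box φ ih =>
    cases y <;> first
      | exact absurd (Nat.pair_eq_pair.1 h).1 (by decide)
      | exact congrArg EForm.box (ih (Nat.pair_eq_pair.1 h).2)
  | ob ψ φ ih1 ih2 =>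
    cases y <;> first
      | exact absurd (Nat.pair_eq_pair.1 h).1 (by decide)
      | (obtain ⟨-, h2⟩ := Nat.pair_eq_pair.1 h
         obtain ⟨h3, h4⟩ := Nat.pair_eq_pair.1 h2
         rw [ih1 h3, ih2 h4])

lemma aget_cons (k : ℕ) (b : Bool) (v : VA) (a : ℕ) :
    aget ((k, b) :: v) a = if a = k then b else aget v a := by
  cases hb : a == k
  · simp only [aget, List.lookup, hb]
    rw [if_neg (by simpa using hb)]
  · simp only [aget, List.lookup, hb]
    rw [if_pos (by simpa using hb)]
    rfl

lemma assigns_cons (k : ℕ) (ks : List ℕ) :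
    assigns (k :: ks) = (assigns ks).map (fun v => (k, true) :: v)
      ++ (assigns ks).map (fun v => (k, false) :: v) := rfl

lemma assigns_complete (keys : List ℕ) (f : ℕ → Bool) :
    ∃ v ∈ assigns keys, ∀ a ∈ keys, aget v a = f a := by
  induction keys with
  | nil => exact ⟨[], by simp [assigns], by simp⟩
  | cons k ks ih =>
    obtain ⟨v, hv, hagree⟩ := ih
    refine ⟨(k, f k) :: v, ?_, ?_⟩
    · rw [assigns_cons]
      cases hfk : f k
      · exact List.mem_append_right _ (List.mem_map.2 ⟨v, hv, by simp [hfk]⟩)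
      · exact List.mem_append_left _ (List.mem_map.2 ⟨v, hv, by simp [hfk]⟩)
    · intro a ha
      rw [aget_cons]
      rcases List.mem_cons.1 ha with h | h
      · simp [h]
      · by_cases hak : a = k
        · simp [hak]
        · simp [hak, hagree a h]

lemma subl_cons (a : VA) (l : List VA) :
    subl (a :: l) = subl l ++ (subl l).map (fun s => a :: s) := rfl

lemma subl_mem {l S : List VA} (h : S.Sublist l) : S ∈ subl l := by
  induction h with
  | slnil => simp [subl]
  | cons a h ih => rw [subl_cons]; exact List.mem_append_left _ ih
  | cons_cons a h ih => rw [subl_cons]; exact List.mem_append_right _ (List.mem_map.2 ⟨_, ih, rfl⟩)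

lemma obboxL_shape {ψ χ : EForm} (h : χ ∈ obboxL ψ) :
    (∃ a, χ = .box a) ∨ (∃ a b, χ = .ob a b) := by
  induction ψ with
  | atom a => simp [obboxL] at h
  | neg φ ih => exact ih h
  | conj φ ψ ih1 ih2 => rcases List.mem_append.1 h with h | h; exacts [ih1 h, ih2 h]
  | box φ ih =>
    rcases List.mem_cons.1 h with h | h
    · exact Or.inl ⟨φ, h⟩
    · exact ih h
  | ob p q ih1 ih2 =>
    rcases List.mem_cons.1 h with h | h
    · exact Or.inr ⟨p, q, h⟩
    · rcases List.mem_append.1 h with h | h; exacts [ih1 h, ih2 h]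

lemma obboxL_closed {ψ χ : EForm} (h : χ ∈ obboxL ψ) :
    (∀ x ∈ obboxL χ, x ∈ obboxL ψ) ∧ (∀ a ∈ atomsL χ, a ∈ atomsL ψ) := by
  induction ψ with
  | atom a => simp [obboxL] at h
  | neg φ ih => exact ih h
  | conj φ ψ ih1 ih2 =>
    rcases List.mem_append.1 h with h | h
    · exact ⟨fun x hx => List.mem_append_left _ ((ih1 h).1 x hx),
        fun a ha => List.mem_append_left _ ((ih1 h).2 a ha)⟩
    · exact ⟨fun x hx => List.mem_append_right _ ((ih2 h).1 x hx),
        fun a ha => List.mem_append_right _ ((ih2 h).2 a ha)⟩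
  | box φ ih =>
    rcases List.mem_cons.1 h with h | h
    · subst h; exact ⟨fun x hx => hx, fun a ha => ha⟩
    · exact ⟨fun x hx => List.mem_cons_of_mem _ ((ih h).1 x hx),
        fun a ha => (ih h).2 a ha⟩
  | ob p q ih1 ih2 =>
    rcases List.mem_cons.1 h with h | h
    · subst h; exact ⟨fun x hx => hx, fun a ha => ha⟩
    · rcases List.mem_append.1 h with h | h
      · exact ⟨fun x hx => List.mem_cons_of_mem _ (List.mem_append_left _ ((ih1 h).1 x hx)),
          fun a ha => List.mem_append_left _ ((ih1 h).2 a ha)⟩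
      · exact ⟨fun x hx => List.mem_cons_of_mem _ (List.mem_append_right _ ((ih2 h).1 x hx)),
          fun a ha => List.mem_append_right _ ((ih2 h).2 a ha)⟩

lemma sat_global {M : PrefModel} {ψ χ : EForm} (h : χ ∈ obboxL ψ) (s t : M.W) :
    M.sat s χ ↔ M.sat t χ := by
  rcases obboxL_shape h with ⟨a, rfl⟩ | ⟨a, b, rfl⟩ <;> exact Iff.rfl


lemma evC_eq_sat (M : PrefModel) (ψ : EForm) (G : VA)
    (hG : ∀ χ ∈ obboxL ψ, ∀ u : M.W, (aget G (encE χ) = true ↔ M.sat u χ)) :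
    ∀ χ : EForm, (∀ x ∈ obboxL χ, x ∈ obboxL ψ) → ∀ (s : M.W) (v : VA),
      (∀ a ∈ atomsL χ, (aget v a = true ↔ M.V a s)) →
      (evC (v, G) (encE χ) = true ↔ M.sat s χ) := by
  intro χ
  induction χ with
  | atom a =>
    intro _ s v hv
    rw [encE_atom, evC_code0]
    simpa only [PrefModel.sat] using hv a (by simp [atomsL])
  | neg φ ih =>
    intro hcl s v hv
    rw [encE_neg, evC_code1]
    have h := ih (by simpa [obboxL] using hcl) s v (by simpa [atomsL] using hv)
    simp only [PrefModel.sat, Bool.not_eq_true', ← h]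
    cases evC (v, G) (encE φ) <;> simp
  | conj φ₁ φ₂ ih1 ih2 =>
    intro hcl s v hv
    rw [encE_conj, evC_code2]
    have h1 := ih1 (fun x hx => hcl x (List.mem_append_left _ hx)) s v
      (fun a ha => hv a (List.mem_append_left _ ha))
    have h2 := ih2 (fun x hx => hcl x (List.mem_append_right _ hx)) s v
      (fun a ha => hv a (List.mem_append_right _ ha))
    simp only [PrefModel.sat, Bool.and_eq_true, h1, h2]
  | box φ ih =>
    intro hcl s v _
    rw [encE_box, evC_code3, ← encE_box]
    exact hG _ (hcl _ (by simp [obboxL])) s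
  | ob p q ih1 ih2 =>
    intro hcl s v _
    rw [encE_ob, evC_code4, ← encE_ob]
    exact hG _ (hcl _ (by simp [obboxL])) s


theorem satC_complete (ψ : EForm) (hex : ∃ (M : PrefModel) (s : M.W), M.sat s ψ) :
    satC (encE ψ) = true := by
  classical
  obtain ⟨M, s₀, hs₀⟩ := hex
  obtain ⟨G, hGmem, hGval⟩ := assigns_complete ((obboxL ψ).map encE)
      (fun c => decide (∃ χ ∈ obboxL ψ, encE χ = c ∧ M.sat s₀ χ))
  have hGiff : ∀ χ ∈ obboxL ψ, ∀ u : M.W, (aget G (encE χ) = true ↔ M.sat u χ) := by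
    intro χ hχ u
    rw [hGval _ (List.mem_map_of_mem hχ)]
    simp only [decide_eq_true_eq]
    constructor
    · rintro ⟨χ', hχ', heq, hsat⟩
      rcases encE_inj heq
      exact (sat_global hχ s₀ u).1 hsat
    · intro hsat
      exact ⟨χ, hχ, rfl, (sat_global hχ u s₀).1 hsat⟩
  have hvec : ∀ s : M.W, ∃ v ∈ assigns (atomsL ψ),
      ∀ a ∈ atomsL ψ, aget v a = decide (M.V a s) := fun s => assigns_complete _ _
  choose vec hvecmem hvecval using hvec
  set S := (assigns (atomsL ψ)).filter
    (fun v => decide (∃ s : M.W, ∀ a ∈ atomsL ψ, aget v a = decide (M.V a s))) with hSdef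
  have hSsub : S ∈ subl (assigns (atomsL ψ)) := subl_mem List.filter_sublist
  have hvS : ∀ s : M.W, vec s ∈ S := fun s =>
    List.mem_filter.2 ⟨hvecmem s, by simp only [decide_eq_true_eq]; exact ⟨s, hvecval s⟩⟩
  have hSchar : ∀ v ∈ S, ∃ s : M.W, ∀ a ∈ atomsL ψ, aget v a = decide (M.V a s) := by
    intro v hv
    have := (List.mem_filter.1 hv).2
    simpa only [decide_eq_true_eq] using this
  have bridge : ∀ χ, (∀ x ∈ obboxL χ, x ∈ obboxL ψ) → (∀ a ∈ atomsL χ, a ∈ atomsL ψ) →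
      ∀ (s : M.W) (v : VA), (∀ a ∈ atomsL ψ, aget v a = decide (M.V a s)) →
      (evC (v, G) (encE χ) = true ↔ M.sat s χ) := by
    intro χ hcl hat s v hv
    exact evC_eq_sat M ψ G hGiff χ hcl s v
      (fun a ha => by rw [hv a (hat a ha)]; simp)
  -- condition B
  have hcondB : condB ((obboxL ψ).map encE) S G = true := by
    rw [condB, List.all_eq_true]
    intro c hc
    obtain ⟨χ, hχ, rfl⟩ := List.mem_map.1 hc
    rcases obboxL_shape hχ with ⟨χ', rfl⟩ | ⟨p, q, rfl⟩
    · rw [if_pos (by simp [encE_box])]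
      have hcl := obboxL_closed hχ
      have hcl1 : ∀ x ∈ obboxL χ', x ∈ obboxL ψ :=
        fun x hx => hcl.1 x (List.mem_cons_of_mem _ hx)
      have hat1 : ∀ a ∈ atomsL χ', a ∈ atomsL ψ := fun a ha => hcl.2 a ha
      have h1 : aget G (encE (EForm.box χ')) = true ↔ ∀ t, M.sat t χ' := hGiff _ hχ s₀
      have h2 : (S.all fun v => evC (v, G) (encE (EForm.box χ')).unpair.2) = true
          ↔ ∀ t, M.sat t χ' := by
        have hun : (encE (EForm.box χ')).unpair.2 = encE χ' := by simp [encE_box]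
        rw [hun, List.all_eq_true]
        constructor
        · intro h t
          exact (bridge χ' hcl1 hat1 t (vec t) (hvecval t)).1 (h _ (hvS t))
        · intro h v hv
          obtain ⟨s, hs⟩ := hSchar v hv
          exact (bridge χ' hcl1 hat1 s v hs).2 (h s)
      have : aget G (encE (EForm.box χ')) =
          (S.all fun v => evC (v, G) (encE (EForm.box χ')).unpair.2) := by
        rw [Bool.eq_iff_iff, h1, h2]
      rw [this, beq_self_eq_true]
    · rw [if_neg (by simp [encE_ob])]
  -- condition C
  have hcondC : condC ((obboxL ψ).map encE) S G = true := by
    rw [condC, List.all_eq_true]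
    intro c hc
    obtain ⟨χ, hχ, rfl⟩ := List.mem_map.1 hc
    rcases obboxL_shape hχ with ⟨χ', rfl⟩ | ⟨p, q, rfl⟩
    · rw [if_neg (by simp [encE_box])]
    · cases hag : aget G (encE (EForm.ob p q)) with
      | true => rw [if_neg (by simp [hag])]
      | false =>
        rw [if_pos (by simp [encE_ob, hag])]
        -- closure facts for p and q
        have hcl := obboxL_closed hχ
        have hclq : ∀ x ∈ obboxL q, x ∈ obboxL ψ := fun x hx =>
          hcl.1 x (List.mem_cons_of_mem _ (List.mem_append_right _ hx))
        have hatq : ∀ a ∈ atomsL q, a ∈ atomsL ψ := fun a ha =>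
          hcl.2 a (List.mem_append_right _ ha)
        have hclp : ∀ x ∈ obboxL p, x ∈ obboxL ψ := fun x hx =>
          hcl.1 x (List.mem_cons_of_mem _ (List.mem_append_left _ hx))
        have hatp : ∀ a ∈ atomsL p, a ∈ atomsL ψ := fun a ha =>
          hcl.2 a (List.mem_append_left _ ha)
        -- a spoiler world exists
        have hnot : ¬ M.sat s₀ (EForm.ob p q) := by
          intro h
          have := (hGiff _ hχ s₀).2 h
          rw [hag] at this
          exact Bool.false_ne_true this
        simp only [PrefModel.sat, not_forall] at hnot
        obtain ⟨w, hw⟩ := hnot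
        obtain ⟨⟨hwq, hwdom⟩, hwnp⟩ := hw
        rw [List.any_eq_true]
        refine ⟨vec w, hvS w, ?_⟩
        rw [okWit]
        have hunq : (encE (EForm.ob p q)).unpair.2.unpair.2 = encE q := by
          simp [encE_ob]
        have hunp : (encE (EForm.ob p q)).unpair.2.unpair.1 = encE p := by
          simp [encE_ob]
        rw [hunq, hunp]
        have e1 : evC (vec w, G) (encE q) = true :=
          (bridge q hclq hatq w (vec w) (hvecval w)).2 hwq
        have e2 : evC (vec w, G) (encE p) = false := by
          cases he : evC (vec w, G) (encE p)
          · rfl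
          · exact absurd ((bridge p hclp hatp w (vec w) (hvecval w)).1 he) hwnp
        rw [e1, e2]
        simp only [Bool.not_false, Bool.true_and]
        rw [List.all_eq_true]
        intro c' hc'
        obtain ⟨χ'', hχ'', rfl⟩ := List.mem_map.1 hc'
        rcases obboxL_shape hχ'' with ⟨b', rfl⟩ | ⟨p'', q'', rfl⟩
        · rw [if_neg (by simp [encE_box])]
        · cases hag'' : aget G (encE (EForm.ob p'' q'')) with
          | false => rw [if_neg (by simp [hag''])]
          | true =>
            rw [if_pos (by simp [encE_ob, hag''])]
            have hunq'' : (encE (EForm.ob p'' q'')).unpair.2.unpair.2 = encE q'' := by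
              simp [encE_ob]
            have hunp'' : (encE (EForm.ob p'' q'')).unpair.2.unpair.1 = encE p'' := by
              simp [encE_ob]
            have hcl'' := obboxL_closed hχ''
            have hclq'' : ∀ x ∈ obboxL q'', x ∈ obboxL ψ := fun x hx =>
              hcl''.1 x (List.mem_cons_of_mem _ (List.mem_append_right _ hx))
            have hatq'' : ∀ a ∈ atomsL q'', a ∈ atomsL ψ := fun a ha =>
              hcl''.2 a (List.mem_append_right _ ha)
            have hclp'' : ∀ x ∈ obboxL p'', x ∈ obboxL ψ := fun x hx =>
              hcl''.1 x (List.mem_cons_of_mem _ (List.mem_append_left _ hx))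
            have hatp'' : ∀ a ∈ atomsL p'', a ∈ atomsL ψ := fun a ha =>
              hcl''.2 a (List.mem_append_left _ ha)
            rw [Bool.not_eq_true']
            by_contra hne
            rw [Bool.not_eq_false] at hne
            rw [hunq'', hunp''] at hne
            simp only [Bool.and_eq_true, Bool.not_eq_true'] at hne
            obtain ⟨⟨E1, E2⟩, hincl⟩ := hne
            -- w is an optimal q''-world violating p'': contradiction
            have hsat'' : M.sat s₀ (EForm.ob p'' q'') := (hGiff _ hχ'' s₀).1 hag''
            have hwq'' : M.sat w q'' := (bridge q'' hclq'' hatq'' w (vec w) (hvecval w)).1 E1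
            have hwdom'' : ∀ y, M.sat y q'' → M.R w y := by
              intro y hy
              have hy' : evC (vec y, G) (encE q'') = true :=
                (bridge q'' hclq'' hatq'' y (vec y) (hvecval y)).2 hy
              have := (List.all_eq_true.1 hincl) (vec y) (hvS y)
              rw [hunq'', hunq] at this
              rw [hy'] at this
              simp only [Bool.not_true, Bool.false_or] at this
              exact hwdom y ((bridge q hclq hatq y (vec y) (hvecval y)).1 this)
            have := hsat'' w ⟨hwq'', hwdom''⟩
            exact absurd ((bridge p'' hclp'' hatp'' w (vec w) (hvecval w)).2 this)
              (by rw [E2]; exact Bool.false_ne_true)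
  -- assemble
  rw [satC, atomsC_enc, obboxC_enc]
  rw [List.any_eq_true]
  refine ⟨S, hSsub, ?_⟩
  rw [Bool.and_eq_true]
  constructor
  · rw [List.any_eq_true]; exact ⟨vec s₀, hvS s₀, rfl⟩
  · rw [List.any_eq_true]
    refine ⟨G, hGmem, ?_⟩
    rw [Bool.and_eq_true, Bool.and_eq_true]
    refine ⟨⟨hcondB, hcondC⟩, ?_⟩
    rw [List.any_eq_true]
    exact ⟨vec s₀, hvS s₀,
      (bridge ψ (fun x h => h) (fun a h => h) s₀ (vec s₀) (hvecval s₀)).2 hs₀⟩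


theorem satC_sound (ψ : EForm) (h : satC (encE ψ) = true) :
    ∃ (M : PrefModel) (s : M.W), M.sat s ψ := by
  classical
  rw [satC, atomsC_enc, obboxC_enc, List.any_eq_true] at h
  obtain ⟨S, _, hS⟩ := h
  rw [Bool.and_eq_true] at hS
  obtain ⟨hSne, hS⟩ := hS
  rw [List.any_eq_true] at hS
  obtain ⟨G, _, hG⟩ := hS
  rw [Bool.and_eq_true, Bool.and_eq_true] at hG
  obtain ⟨⟨hB, hC⟩, hev⟩ := hG
  rw [List.any_eq_true] at hev
  obtain ⟨v₀, hv₀, hev₀⟩ := hev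
  rw [List.any_eq_true] at hSne
  -- witness worlds for false ob-formulas
  have hwit : ∀ p q : EForm, EForm.ob p q ∈ obboxL ψ →
      aget G (encE (EForm.ob p q)) = false →
      ∃ v, v ∈ S ∧ okWit ((obboxL ψ).map encE) S G (encE (EForm.ob p q)) v = true := by
    intro p q hmem hag
    have := (List.all_eq_true.1 (by rw [← condC]; exact hC)) _ (List.mem_map_of_mem hmem)
    rw [if_pos ⟨by simp [encE_ob], hag⟩] at this
    rw [List.any_eq_true] at this
    obtain ⟨v, hv, hok⟩ := this
    exact ⟨v, hv, hok⟩
  -- the model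
  let Wit := {pq : EForm × EForm // EForm.ob pq.1 pq.2 ∈ obboxL ψ ∧
    aget G (encE (EForm.ob pq.1 pq.2)) = false}
  let W := {v : VA // v ∈ S} ⊕ Wit
  let wv : Wit → VA := fun w => (hwit w.1.1 w.1.2 w.2.1 w.2.2).choose
  have wvS : ∀ w : Wit, wv w ∈ S := fun w => (hwit w.1.1 w.1.2 w.2.1 w.2.2).choose_spec.1
  have wvOk : ∀ w : Wit,
      okWit ((obboxL ψ).map encE) S G (encE (EForm.ob w.1.1 w.1.2)) (wv w) = true :=
    fun w => (hwit w.1.1 w.1.2 w.2.1 w.2.2).choose_spec.2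
  let vecOf : W → VA := Sum.elim Subtype.val wv
  have vecS : ∀ w : W, vecOf w ∈ S := by
    rintro (⟨v, hv⟩ | w)
    · exact hv
    · exact wvS w
  have hne : Nonempty W := by
    obtain ⟨v, hv, -⟩ := hSne
    exact ⟨Sum.inl ⟨v, hv⟩⟩
  let M : PrefModel :=
    { W := W
      ne := hne
      R := fun w t => match w with
        | Sum.inl _ => False
        | Sum.inr c => evC (vecOf t, G) (encE c.1.2) = true
      V := fun a w => aget (vecOf w) a = true }
  -- key lemma
  have key : ∀ χ : EForm, (∀ x ∈ obboxL χ, x ∈ obboxL ψ) →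
      ∀ w : M.W, (M.sat w χ ↔ evC (vecOf w, G) (encE χ) = true) := by
    intro χ
    induction χ with
    | atom a =>
      intro _ w
      rw [encE_atom, evC_code0]
      exact Iff.rfl
    | neg φ ih =>
      intro hcl w
      rw [encE_neg, evC_code1]
      have h := ih (by simpa [obboxL] using hcl) w
      simp only [PrefModel.sat, h, Bool.not_eq_true']
      cases evC (vecOf w, G) (encE φ) <;> simp
    | conj φ₁ φ₂ ih1 ih2 =>
      intro hcl w
      rw [encE_conj, evC_code2]
      have h1 := ih1 (fun x hx => hcl x (List.mem_append_left _ hx)) w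
      have h2 := ih2 (fun x hx => hcl x (List.mem_append_right _ hx)) w
      simp only [PrefModel.sat, h1, h2, Bool.and_eq_true]
    | box φ ih =>
      intro hcl w
      rw [encE_box, evC_code3, ← encE_box]
      have hmem : EForm.box φ ∈ obboxL ψ := hcl _ (by simp [obboxL])
      have hB' := (List.all_eq_true.1 (by rw [← condB]; exact hB)) _
        (List.mem_map_of_mem hmem)
      rw [if_pos (by simp [encE_box])] at hB'
      have hagl : aget G (encE (EForm.box φ)) =
          (S.all fun v => evC (v, G) (encE (EForm.box φ)).unpair.2) := beq_iff_eq.1 hB'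
      have hun : (encE (EForm.box φ)).unpair.2 = encE φ := by simp [encE_box]
      rw [hun] at hagl
      have ihφ := ih (fun x hx => hcl x (List.mem_cons_of_mem _ hx))
      show (∀ t, M.sat t φ) ↔ _
      rw [hagl, List.all_eq_true]
      constructor
      · intro h v hv
        exact (ihφ (Sum.inl ⟨v, hv⟩)).1 (h _)
      · intro h t
        exact (ihφ t).2 (h _ (vecS t))
    | ob p q ih1 ih2 =>
      intro hcl w
      rw [encE_ob, evC_code4, ← encE_ob]
      have hmem : EForm.ob p q ∈ obboxL ψ := hcl _ (by simp [obboxL])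
      have ihp := ih1 (fun x hx =>
        hcl x (List.mem_cons_of_mem _ (List.mem_append_left _ hx)))
      have ihq := ih2 (fun x hx =>
        hcl x (List.mem_cons_of_mem _ (List.mem_append_right _ hx)))
      have hunq : (encE (EForm.ob p q)).unpair.2.unpair.2 = encE q := by simp [encE_ob]
      have hunp : (encE (EForm.ob p q)).unpair.2.unpair.1 = encE p := by simp [encE_ob]
      cases hag : aget G (encE (EForm.ob p q)) with
      | true =>
        refine iff_of_true ?_ rfl
        rintro (⟨v, hv⟩ | d) ⟨hq', hdom⟩
        · exact (hdom _ hq').elim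
        · have hok := wvOk d
          rw [okWit, Bool.and_eq_true, Bool.and_eq_true] at hok
          obtain ⟨⟨-, -⟩, hAll⟩ := hok
          have hall := List.all_eq_true.1 hAll _ (List.mem_map_of_mem hmem)
          rw [if_pos ⟨by simp [encE_ob], hag⟩] at hall
          rw [hunq, hunp] at hall
          have evq : evC (wv d, G) (encE q) = true := (ihq (Sum.inr d)).1 hq'
          have hund : (encE (EForm.ob d.1.1 d.1.2)).unpair.2.unpair.2 = encE d.1.2 := by
            simp [encE_ob]
          have hincl : inclC S G (encE (EForm.ob p q)) (encE (EForm.ob d.1.1 d.1.2)) = true := by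
            rw [inclC, List.all_eq_true]
            intro u hu
            rw [hunq, hund]
            cases hevu : evC (u, G) (encE q)
            · simp
            · have hsq : M.sat (Sum.inl ⟨u, hu⟩ : M.W) q := (ihq _).2 hevu
              have hr : evC (u, G) (encE d.1.2) = true := hdom _ hsq
              simp [hr]
          rw [evq, hincl] at hall
          simp only [Bool.true_and, Bool.and_true, Bool.not_not] at hall
          exact (ihp (Sum.inr d)).2 hall
      | false =>
        refine iff_of_false ?_ (by simp)
        intro hsat
        have hok := wvOk ⟨(p, q), hmem, hag⟩
        rw [okWit, Bool.and_eq_true, Bool.and_eq_true] at hok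
        obtain ⟨⟨hE1, hE2⟩, -⟩ := hok
        rw [hunq] at hE1
        rw [hunp] at hE2
        have hsp := hsat (Sum.inr ⟨(p, q), hmem, hag⟩)
          ⟨(ihq _).2 hE1, fun y hy => (ihq y).1 hy⟩
        have hvp : evC (wv (⟨(p, q), hmem, hag⟩ : Wit), G) (encE p) = true := (ihp _).1 hsp
        rw [hvp] at hE2
        simp at hE2
  obtain ⟨v, hv, -⟩ := hSne
  exact ⟨M, Sum.inl ⟨v₀, hv₀⟩, (key ψ (fun x hx => hx) _).2 hev₀⟩


theorem satC_iff (ψ : EForm) :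
    satC (encE ψ) = true ↔ ∃ (M : PrefModel) (s : M.W), M.sat s ψ :=
  ⟨satC_sound ψ, satC_complete ψ⟩

/-- **Decidability of E**: validity in the class of all preference models is
decidable, i.e. there is a computable function from (codes of) formulas to
Booleans returning `true` exactly on the valid formulas. -/
theorem E_decidable :
    Function.Injective encE ∧
    ∃ g : ℕ → Bool, Computable g ∧ ∀ φ : EForm, (g (encE φ) = true ↔ EValid φ) := by
  refine ⟨encE_inj, decE, EDec.decE_pr.to_comp, ?_⟩
  intro φ
  have hpair : decE (encE φ) = !(satC (encE (EForm.neg φ))) := rfl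
  rw [hpair]
  constructor
  · intro h M s
    by_contra hns
    have hsat : ∃ (M' : PrefModel) (s' : M'.W), M'.sat s' (EForm.neg φ) := ⟨M, s, hns⟩
    rw [satC_complete _ hsat] at h
    simp at h
  · intro h
    cases hs : satC (encE (EForm.neg φ)) with
    | true =>
      obtain ⟨M, s, hMs⟩ := satC_sound _ hs
      exact absurd (h M s) hMs
    | false => simp
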